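/- Let σ_d : ℝ/ℤ → ℝ/ℤ, x ↦ d·x mod 1, with d ≥ 2. If I = (a,b) is an open arc of length |I| ≥ 1/d whose endpoints satisfy σ_d(a), σ_d(b) ∉ I, then the closure of I contains a fixed point of σ_d. -/

import Mathlib

/-- coe commutes with zsmul and integer shifts vanish. -/
lemma coe_eq_coe_of_sub_int (x y : ℝ) (m : ℤ) (h : x - y = m) :
    ((x : ℝ) : AddCircle (1:ℝ)) = ((y : ℝ) : AddCircle (1:ℝ)) := by
  have : ((x : ℝ) : AddCircle (1:ℝ)) - ((y : ℝ) : AddCircle (1:ℝ)) = 0 := by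
    rw [← AddCircle.coe_sub, h, AddCircle.coe_eq_zero_iff]
    exact ⟨m, by simp⟩
  linear_combination (norm := abel) this

lemma zsmul_coe (d : ℤ) (x : ℝ) :
    (d • ((x : ℝ) : AddCircle (1:ℝ))) = (((d * x : ℝ)) : AddCircle (1:ℝ)) := by
  rw [← AddCircle.coe_zsmul]; norm_num

/-- If an open arc I = (a,b) of length ≥ 1/d satisfies σ_d(a), σ_d(b) ∉ I,
then the closure of I contains a fixed point of σ_d. -/
theorem stmt1 (d : ℕ) (hd : 2 ≤ d) (a b : ℝ) (hab : a < b) (hb1 : b - a < 1)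
    (hlen : 1 / d ≤ b - a)
    (ha : ((d : ℤ) • ((a : ℝ) : AddCircle (1:ℝ))) ∉
      (fun t : ℝ => (t : AddCircle (1:ℝ))) '' Set.Ioo a b)
    (hb : ((d : ℤ) • ((b : ℝ) : AddCircle (1:ℝ))) ∉
      (fun t : ℝ => (t : AddCircle (1:ℝ))) '' Set.Ioo a b) :
    ∃ z ∈ (fun t : ℝ => (t : AddCircle (1:ℝ))) '' Set.Icc a b, (d : ℤ) • z = z := by
  have hd0 : (0:ℝ) < d := by positivity
  have hdb : 1 ≤ (d:ℝ) * (b - a) := by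
    rw [div_le_iff₀ hd0] at hlen; linarith [hlen]
  -- choose integer m in the open interval (d*a - b, d*b - a)
  set m : ℤ := ⌊(d:ℝ) * a - b⌋ + 1 with hm
  have hm1 : (d:ℝ) * a - b < m := by
    rw [hm]; push_cast; linarith [Int.lt_floor_add_one ((d:ℝ) * a - b)]
  have hm2 : (m:ℝ) < (d:ℝ) * b - a := by
    have h1 : (1:ℝ) < ((d:ℝ) + 1) * (b - a) := by nlinarith
    rw [hm]; push_cast; nlinarith [Int.floor_le ((d:ℝ) * a - b)]
  -- m is not in the two side intervals
  have ha' : ¬ (a < (d:ℝ) * a - m ∧ (d:ℝ) * a - m < b) := by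
    rintro ⟨h1, h2⟩
    exact ha ⟨(d:ℝ) * a - m, ⟨h1, h2⟩, by
      rw [zsmul_coe]
      exact coe_eq_coe_of_sub_int _ _ (-m) (by push_cast; ring)⟩
  have hb' : ¬ (a < (d:ℝ) * b - m ∧ (d:ℝ) * b - m < b) := by
    rintro ⟨h1, h2⟩
    exact hb ⟨(d:ℝ) * b - m, ⟨h1, h2⟩, by
      rw [zsmul_coe]
      exact coe_eq_coe_of_sub_int _ _ (-m) (by push_cast; ring)⟩
  have hma : ((d:ℝ) - 1) * a ≤ m := by
    by_contra h
    push_neg at h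
    exact ha' ⟨by nlinarith, by nlinarith⟩
  have hmb : (m:ℝ) ≤ ((d:ℝ) - 1) * b := by
    by_contra h
    push_neg at h
    exact hb' ⟨by nlinarith, by nlinarith⟩
  have hd1 : (0:ℝ) < (d:ℝ) - 1 := by
    have : (2:ℝ) ≤ d := by exact_mod_cast hd
    linarith
  refine ⟨((m / ((d:ℝ) - 1) : ℝ) : AddCircle (1:ℝ)), ⟨m / ((d:ℝ) - 1), ⟨?_, ?_⟩, rfl⟩, ?_⟩
  · rw [le_div_iff₀ hd1]; linarith [hma]
  · rw [div_le_iff₀ hd1]; linarith [hmb]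
  · rw [zsmul_coe]
    refine coe_eq_coe_of_sub_int _ _ m ?_
    field_simp
    push_cast; ring
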